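/- Let ‖·‖ be a seminorm on the real vector space of finitely supported functions [0,T] → ℝ. Then there exist constants A₁, A₂ > 0 with A₁‖η‖_D ≤ ‖η‖ ≤ A₂‖η‖_D for every ±1-valued event sequence η on [0,T] if and only if the following three conditions hold: (i) sup{‖η‖ : η a nonzero ±1-valued event sequence on [0,T] with alternating signs} < ∞; (ii) inf{‖η‖ / #supp(η) : η a nonzero event sequence on [0,T] all of whose values are +1} > 0; (iii) there is a constant c > 0 such that for every ±1-valued event sequence η on [0,T], every interval I ⊆ [0,T], and all m, n ∈ ℕ, every event sequence η′ obtained from the restriction η·1_I by m successive (+−)-transcription steps followed by n successive (−+)-transcription steps satisfies ‖η′‖ ≤ c‖η‖. -/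

import Mathlib

open Set Function Filter Classical

/-- The next SOD sampling time after time `s` for input `f`, threshold `θ`, on `[0,T]`:
the infimum of `{t ∈ (s,T] : |f t - f s| ≥ θ}` if this set is nonempty, `none` otherwise. -/
noncomputable def sodNext (T θ : ℝ) (f : ℝ → ℝ) (s : ℝ) : Option ℝ :=
  if (∃ t ∈ Set.Ioc s T, θ ≤ |f t - f s|) then
    some (sInf {t | t ∈ Set.Ioc s T ∧ θ ≤ |f t - f s|})
  else none

/-- The `k`-th SOD sampling time (`t_0 = 0`), `none` if the recursion has stopped before `k`. -/
noncomputable def sodTime (T θ : ℝ) (f : ℝ → ℝ) : ℕ → Option ℝ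
  | 0 => some 0
  | n + 1 => (sodTime T θ f n).bind (sodNext T θ f)

/-- The SOD output event sequence `Φ_θ(f)` : it takes the value `f t_k - f t_{k-1}` at
each sampling time `t_k`, `k ≥ 1`, and `0` elsewhere. -/
noncomputable def sodOut (T θ : ℝ) (f : ℝ → ℝ) : ℝ → ℝ := fun t =>
  if h : ∃ k : ℕ, ∃ s : ℝ, sodTime T θ f k = some s ∧ sodNext T θ f s = some t
  then f t - f h.choose_spec.choose
  else 0

/-- Membership in `F[0,T]`: continuous on `[0,T]` with `f 0 = 0`. -/
def memF (T : ℝ) (f : ℝ → ℝ) : Prop :=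
  ContinuousOn f (Set.Icc 0 T) ∧ f 0 = 0

/-- An event sequence on `[0,T]`: finitely supported with support in `[0,T]`. -/
def IsEventSeq (T : ℝ) (η : ℝ → ℝ) : Prop :=
  (Function.support η).Finite ∧ Function.support η ⊆ Set.Icc 0 T

/-- `η` is `±1`-valued on its support. -/
def IsPM (η : ℝ → ℝ) : Prop :=
  ∀ t ∈ Function.support η, η t = 1 ∨ η t = -1

/-- Weyl's discrepancy norm `‖η‖_D = sup_{0 ≤ a ≤ b ≤ T} |Σ_{t ∈ [a,b]} η t|`. -/
noncomputable def discNorm (T : ℝ) (η : ℝ → ℝ) : ℝ :=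
  sSup {x | ∃ a b : ℝ, 0 ≤ a ∧ a ≤ b ∧ b ≤ T ∧ x = |∑ᶠ t ∈ Set.Icc a b, η t|}

/-- Alexiewicz norm `‖η‖_A = sup_{a ∈ [0,T]} |Σ_{t ∈ [0,a]} η t|`. -/
noncomputable def alexNorm (T : ℝ) (η : ℝ → ℝ) : ℝ :=
  sSup {x | ∃ a : ℝ, 0 ≤ a ∧ a ≤ T ∧ x = |∑ᶠ t ∈ Set.Icc 0 a, η t|}

/-- The values of `η` at consecutive support points alternate in sign. -/
def Alternating (η : ℝ → ℝ) : Prop :=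
  ∀ s u : ℝ, s ∈ Function.support η → u ∈ Function.support η → s < u →
    (∀ t ∈ Function.support η, ¬ (s < t ∧ t < u)) → η s * η u < 0

/-- One `(+−)`-transcription step: erase a `+1` followed (with no support in between) by a `−1`. -/
def StepPM (η η' : ℝ → ℝ) : Prop :=
  ∃ s u : ℝ, s < u ∧ η s = 1 ∧ η u = -1 ∧ (∀ t : ℝ, s < t → t < u → η t = 0) ∧
    η' = Function.update (Function.update η s 0) u 0

/-- One `(−+)`-transcription step: erase a `−1` followed (with no support in between) by a `+1`. -/
def StepMP (η η' : ℝ → ℝ) : Prop :=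
  ∃ s u : ℝ, s < u ∧ η s = -1 ∧ η u = 1 ∧ (∀ t : ℝ, s < t → t < u → η t = 0) ∧
    η' = Function.update (Function.update η s 0) u 0

/-- `StepsN R n x y` : `y` is obtained from `x` by `n` successive `R`-steps. -/
def StepsN (R : (ℝ → ℝ) → (ℝ → ℝ) → Prop) : ℕ → (ℝ → ℝ) → (ℝ → ℝ) → Prop
  | 0, x, y => x = y
  | n + 1, x, z => ∃ y, R x y ∧ StepsN R n y z

/-- Uniform distance `‖f − g‖_∞` over `[0,T]`. -/
noncomputable def unifDist (T : ℝ) (f g : ℝ → ℝ) : ℝ :=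
  sSup {x | ∃ t ∈ Set.Icc 0 T, x = |f t - g t|}

namespace S6
open Function Set

/-- Interval sum. -/
noncomputable def isum (η : ℝ → ℝ) (a b : ℝ) : ℝ := ∑ᶠ t ∈ Set.Icc a b, η t

lemma supp_sub {η : ℝ → ℝ} (hfin : (support η).Finite) :
    support η ⊆ ↑hfin.toFinset := by rw [Set.Finite.coe_toFinset]

lemma isum_eq_sum_of_subset {η : ℝ → ℝ} {G : Finset ℝ} (h : support η ⊆ ↑G) (a b : ℝ) :
    isum η a b = ∑ t ∈ G.filter (fun t => a ≤ t ∧ t ≤ b), η t := by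
  apply finsum_mem_eq_sum_of_inter_support_eq
  ext t
  simp only [Set.mem_inter_iff, Set.mem_Icc, Finset.coe_filter, Set.mem_setOf_eq,
    Function.mem_support]
  constructor
  · rintro ⟨⟨h1, h2⟩, h3⟩
    exact ⟨⟨h (by exact h3), h1, h2⟩, h3⟩
  · rintro ⟨⟨_, h1, h2⟩, h3⟩
    exact ⟨⟨h1, h2⟩, h3⟩

/-- The set whose sup is the discrepancy norm. -/
def DSet (T : ℝ) (η : ℝ → ℝ) : Set ℝ :=
  {x | ∃ a b : ℝ, 0 ≤ a ∧ a ≤ b ∧ b ≤ T ∧ x = |isum η a b|}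

lemma discNorm_eq (T : ℝ) (η : ℝ → ℝ) : discNorm T η = sSup (DSet T η) := rfl

lemma DSet_nonempty {T : ℝ} (hT : 0 ≤ T) (η : ℝ → ℝ) : (DSet T η).Nonempty :=
  ⟨_, 0, 0, le_rfl, le_rfl, hT, rfl⟩

lemma DSet_finite {T : ℝ} {η : ℝ → ℝ} (hfin : (support η).Finite) : (DSet T η).Finite := by
  apply Set.Finite.subset (Set.Finite.image (fun s : Finset ℝ => |∑ t ∈ s, η t|)
    (hfin.toFinset.powerset : Finset (Finset ℝ)).finite_toSet)
  rintro x ⟨a, b, _, _, _, rfl⟩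
  refine ⟨hfin.toFinset.filter (fun t => a ≤ t ∧ t ≤ b), ?_, ?_⟩
  · simp only [Finset.coe_powerset, Set.mem_preimage, Set.mem_powerset_iff, Finset.coe_subset]
    exact Finset.filter_subset _ _
  · rw [isum_eq_sum_of_subset (supp_sub hfin) a b]

lemma DSet_bddAbove {T : ℝ} {η : ℝ → ℝ} (hfin : (support η).Finite) : BddAbove (DSet T η) :=
  (DSet_finite hfin).bddAbove

lemma le_discNorm {T : ℝ} {η : ℝ → ℝ} (hfin : (support η).Finite) {a b : ℝ}
    (ha : 0 ≤ a) (hab : a ≤ b) (hb : b ≤ T) : |isum η a b| ≤ discNorm T η :=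
  le_csSup (DSet_bddAbove hfin) ⟨a, b, ha, hab, hb, rfl⟩

lemma discNorm_le {T : ℝ} (hT : 0 ≤ T) {η : ℝ → ℝ} {y : ℝ}
    (h : ∀ x ∈ DSet T η, x ≤ y) : discNorm T η ≤ y :=
  csSup_le (DSet_nonempty hT η) h

lemma discNorm_mem {T : ℝ} (hT : 0 ≤ T) {η : ℝ → ℝ} (hfin : (support η).Finite) :
    discNorm T η ∈ DSet T η :=
  Set.Nonempty.csSup_mem (DSet_nonempty hT η) (DSet_finite hfin)

lemma discNorm_nonneg {T : ℝ} (hT : 0 ≤ T) {η : ℝ → ℝ} (hfin : (support η).Finite) :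
    0 ≤ discNorm T η := by
  obtain ⟨a, b, _, _, _, hx⟩ := discNorm_mem hT hfin
  rw [hx]; positivity

lemma support_update_zero (f : ℝ → ℝ) (s : ℝ) :
    support (Function.update f s 0) = support f \ {s} := by
  ext t
  by_cases h : t = s
  · subst h; simp
  · simp [Function.update_of_ne h, h]

end S6
namespace S6
open Function Set

noncomputable def totSum (η : ℝ → ℝ) : ℝ := ∑ᶠ t, η t

lemma sum_erase_eq_sub' {P : Finset ℝ} {x : ℝ} (η : ℝ → ℝ) :
    ∑ t ∈ P.erase x, η t = ∑ t ∈ P, η t - (if x ∈ P then η x else 0) := by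
  by_cases h : x ∈ P
  · rw [if_pos h, eq_sub_iff_add_eq, Finset.sum_erase_add _ _ h]
  · rw [if_neg h, Finset.erase_eq_of_notMem h, sub_zero]

lemma sum_update_zero (P : Finset ℝ) (x : ℝ) (η : ℝ → ℝ) :
    ∑ t ∈ P, Function.update η x 0 t = ∑ t ∈ P.erase x, η t := by
  by_cases h : x ∈ P
  · rw [Finset.sum_update_of_mem h, zero_add, Finset.erase_eq]
  · rw [Finset.erase_eq_of_notMem h]
    exact Finset.sum_congr rfl fun t ht => Function.update_of_ne (by rintro rfl; exact h ht) _ _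

lemma sum_update2 (P : Finset ℝ) (s u : ℝ) (η : ℝ → ℝ) :
    ∑ t ∈ P, (Function.update (Function.update η s 0) u 0) t
      = ∑ t ∈ (P.erase u).erase s, η t := by
  rw [sum_update_zero, sum_update_zero]

lemma step_cases {η η' : ℝ → ℝ} (h : StepPM η η' ∨ StepMP η η') :
    ∃ s u : ℝ, s < u ∧ η s ≠ 0 ∧ η u ≠ 0 ∧ η s + η u = 0 ∧
      (∀ t : ℝ, s < t → t < u → η t = 0) ∧
      η' = Function.update (Function.update η s 0) u 0 := by
  rcases h with ⟨s, u, h1, h2, h3, h4, h5⟩ | ⟨s, u, h1, h2, h3, h4, h5⟩ <;>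
    exact ⟨s, u, h1, by rw [h2]; norm_num, by rw [h3]; norm_num,
      by rw [h2, h3]; ring, h4, h5⟩

lemma step_support_subset {η η' : ℝ → ℝ} (h : StepPM η η' ∨ StepMP η η') :
    support η' ⊆ support η := by
  obtain ⟨s, u, _, _, _, _, _, rfl⟩ := step_cases h
  rw [support_update_zero, support_update_zero]
  exact fun t ht => ht.1.1

lemma step_agree {η η' : ℝ → ℝ} (h : StepPM η η' ∨ StepMP η η') :
    ∀ t ∈ support η', η' t = η t := by
  obtain ⟨s, u, _, _, _, _, _, rfl⟩ := step_cases h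
  intro t ht
  rw [support_update_zero, support_update_zero] at ht
  rw [Function.update_of_ne ht.2, Function.update_of_ne ht.1.2]

lemma step_event {T : ℝ} {η η' : ℝ → ℝ} (h : StepPM η η' ∨ StepMP η η')
    (hE : IsEventSeq T η) : IsEventSeq T η' :=
  ⟨hE.1.subset (step_support_subset h), (step_support_subset h).trans hE.2⟩

lemma step_pm {η η' : ℝ → ℝ} (h : StepPM η η' ∨ StepMP η η') (hP : IsPM η) : IsPM η' :=
  fun t ht => (step_agree h t ht) ▸ hP t (step_support_subset h ht)

lemma step_ssub {η η' : ℝ → ℝ} (h : StepPM η η' ∨ StepMP η η') :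
    support η' ⊂ support η := by
  obtain ⟨s, u, hsu, hs0, _, _, _, rfl⟩ := step_cases h
  rw [support_update_zero, support_update_zero]
  refine ⟨fun t ht => ht.1.1, fun hcon => ?_⟩
  have := hcon hs0
  simp [hsu.ne] at this

lemma step_tot {η η' : ℝ → ℝ} (h : StepPM η η' ∨ StepMP η η')
    (hfin : (support η).Finite) : totSum η' = totSum η := by
  obtain ⟨s, u, hsu, hs0, hu0, hsum, _, rfl⟩ := step_cases h
  have hfin' := hfin.subset (step_support_subset h)
  unfold totSum
  rw [finsum_eq_sum_of_support_subset _ (supp_sub hfin),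
    finsum_eq_sum_of_support_subset _ ((step_support_subset h).trans (supp_sub hfin)),
    sum_update2, sum_erase_eq_sub', sum_erase_eq_sub',
    if_pos (by simpa using hu0), if_pos]
  · linarith
  · exact Finset.mem_erase.2 ⟨hsu.ne, by simpa using hs0⟩

lemma convex_sum_le {T : ℝ} (hT : 0 ≤ T) {η : ℝ → ℝ} (hE : IsEventSeq T η)
    (Q : Finset ℝ) (hQs : ↑Q ⊆ support η)
    (hconv : ∀ t ∈ support η, ∀ x ∈ Q, ∀ y ∈ Q, x ≤ t → t ≤ y → t ∈ Q) :
    |∑ t ∈ Q, η t| ≤ discNorm T η := by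
  obtain ⟨hfin, hsub⟩ := hE
  rcases Q.eq_empty_or_nonempty with rfl | hne
  · simpa using discNorm_nonneg hT hfin
  · have ha := Q.min'_mem hne; have hb := Q.max'_mem hne
    set a := Q.min' hne with hadef
    set b := Q.max' hne with hbdef
    have haS : a ∈ Set.Icc (0:ℝ) T := hsub (hQs ha)
    have hbS : b ∈ Set.Icc (0:ℝ) T := hsub (hQs hb)
    have key : hfin.toFinset.filter (fun t => a ≤ t ∧ t ≤ b) = Q := by
      ext t
      simp only [Finset.mem_filter, Set.Finite.mem_toFinset]
      constructor
      · rintro ⟨ht, h1, h2⟩; exact hconv t ht a ha b hb h1 h2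
      · intro ht; exact ⟨hQs ht, Q.min'_le t ht, Q.le_max' t ht⟩
    have := le_discNorm hfin haS.1 (Q.min'_le b hb) hbS.2
    rwa [isum_eq_sum_of_subset (supp_sub hfin) a b, key] at this

lemma step_disc {T : ℝ} (hT : 0 ≤ T) {η η' : ℝ → ℝ} (h : StepPM η η' ∨ StepMP η η')
    (hE : IsEventSeq T η) : discNorm T η' ≤ discNorm T η := by
  have hss := step_support_subset h
  obtain ⟨hfin, hsub⟩ := hE
  obtain ⟨s, u, hsu, hs0, hu0, hsum0, hgap, hupd⟩ := step_cases h
  apply discNorm_le hT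
  rintro x ⟨a, b, ha, hab, hb, rfl⟩
  rw [isum_eq_sum_of_subset (G := hfin.toFinset) (hss.trans (supp_sub hfin)) a b, hupd,
    sum_update2]
  set P := hfin.toFinset.filter (fun t => a ≤ t ∧ t ≤ b) with hP
  have hPsupp : ↑P ⊆ support η := by
    intro t ht
    simp only [hP, Finset.coe_filter, Set.mem_setOf_eq, Set.Finite.mem_toFinset] at ht
    exact ht.1
  have hPmem : ∀ t, t ∈ P ↔ (t ∈ support η ∧ a ≤ t ∧ t ≤ b) := by
    intro t; simp [hP, Set.Finite.mem_toFinset, and_assoc]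
  by_cases hsP : s ∈ P <;> by_cases huP : u ∈ P
  · -- both present: sum equals the full interval sum
    rw [sum_erase_eq_sub' η, sum_erase_eq_sub' η, if_pos huP,
      if_pos (Finset.mem_erase.2 ⟨hsu.ne, hsP⟩)]
    have : ∑ t ∈ P, η t - η u - η s = ∑ t ∈ P, η t := by linarith
    rw [this, ← isum_eq_sum_of_subset (supp_sub hfin) a b]
    exact le_discNorm hfin ha hab hb
  · -- only s present
    rw [Finset.erase_eq_of_notMem huP]
    apply convex_sum_le hT ⟨hfin, hsub⟩
    · exact fun t ht => hPsupp (Finset.erase_subset _ _ ht)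
    · intro t ht x hx y hy hxt hty
      have hxP := Finset.erase_subset _ _ hx
      have hyP := Finset.erase_subset _ _ hy
      have htP : t ∈ P := (hPmem t).2 ⟨ht, le_trans ((hPmem x).1 hxP).2.1 hxt,
        le_trans hty ((hPmem y).1 hyP).2.2⟩
      refine Finset.mem_erase.2 ⟨?_, htP⟩
      rintro rfl
      -- t = s; derive contradiction using y
      have hys : y ≠ t := (Finset.mem_erase.1 hy).1
      have hbu : b < u := by
        by_contra hc
        push_neg at hc
        exact huP ((hPmem u).2 ⟨by simpa using hu0,
          le_trans ((hPmem t).1 htP).2.1 (le_of_lt hsu), hc⟩)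
      have h1 : t < y := lt_of_le_of_ne hty (Ne.symm hys)
      have h2 : y < u := lt_of_le_of_lt ((hPmem y).1 hyP).2.2 hbu
      exact hPsupp hyP (hgap y h1 h2)
  · -- only u present
    rw [show (P.erase u).erase s = P.erase u from
      Finset.erase_eq_of_notMem (fun hc => hsP (Finset.erase_subset _ _ hc))]
    apply convex_sum_le hT ⟨hfin, hsub⟩
    · exact fun t ht => hPsupp (Finset.erase_subset _ _ ht)
    · intro t ht x hx y hy hxt hty
      have hxP := Finset.erase_subset _ _ hx
      have hyP := Finset.erase_subset _ _ hy
      have htP : t ∈ P := (hPmem t).2 ⟨ht, le_trans ((hPmem x).1 hxP).2.1 hxt,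
        le_trans hty ((hPmem y).1 hyP).2.2⟩
      refine Finset.mem_erase.2 ⟨?_, htP⟩
      rintro rfl
      -- t = u; derive contradiction using x
      have hxs : x ≠ t := (Finset.mem_erase.1 hx).1
      have hsa : s < a := by
        by_contra hc
        push_neg at hc
        exact hsP ((hPmem s).2 ⟨by simpa using hs0, hc,
          le_trans (le_of_lt hsu) ((hPmem t).1 htP).2.2⟩)
      have h1 : s < x := lt_of_lt_of_le hsa ((hPmem x).1 hxP).2.1
      have h2 : x < t := lt_of_le_of_ne hxt hxs
      exact hPsupp hxP (hgap x h1 h2)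
  · -- neither present
    rw [Finset.erase_eq_of_notMem huP, Finset.erase_eq_of_notMem hsP,
      ← isum_eq_sum_of_subset (supp_sub hfin) a b]
    exact le_discNorm hfin ha hab hb

end S6
namespace S6
open Function Set

lemma ind_supp {η : ℝ → ℝ} (I : Set ℝ) : support (I.indicator η) ⊆ support η := by
  rw [Set.support_indicator]; exact Set.inter_subset_right

lemma indicator_event {T : ℝ} {η : ℝ → ℝ} (hE : IsEventSeq T η) (I : Set ℝ) :
    IsEventSeq T (I.indicator η) :=
  ⟨hE.1.subset (ind_supp I), (ind_supp I).trans hE.2⟩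

lemma indicator_pm {η : ℝ → ℝ} (hP : IsPM η) (I : Set ℝ) : IsPM (I.indicator η) := by
  intro t ht
  rw [Set.support_indicator] at ht
  rw [Set.indicator_of_mem ht.1]
  exact hP t ht.2

lemma indicator_disc {T : ℝ} (hT : 0 ≤ T) {η : ℝ → ℝ} (hE : IsEventSeq T η)
    {I : Set ℝ} (hI : I.OrdConnected) :
    discNorm T (I.indicator η) ≤ discNorm T η := by
  obtain ⟨hfin, hsub⟩ := hE
  apply discNorm_le hT
  rintro x ⟨a, b, ha, hab, hb, rfl⟩
  rw [isum_eq_sum_of_subset (G := hfin.toFinset)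
    ((ind_supp I).trans (supp_sub hfin)) a b]
  set P := hfin.toFinset.filter (fun t => a ≤ t ∧ t ≤ b) with hP
  have hPmem : ∀ t, t ∈ P ↔ (t ∈ support η ∧ a ≤ t ∧ t ≤ b) := by
    intro t; simp [hP, Set.Finite.mem_toFinset, and_assoc]
  have hsplit : ∑ t ∈ P, I.indicator η t = ∑ t ∈ P.filter (· ∈ I), η t := by
    rw [show (∑ t ∈ P, I.indicator η t) = ∑ t ∈ P, (if t ∈ I then η t else 0) from
      Finset.sum_congr rfl (fun t _ => Set.indicator_apply I η t)]
    exact (Finset.sum_filter _ _).symm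
  rw [hsplit]
  apply convex_sum_le hT ⟨hfin, hsub⟩
  · intro t ht
    simp only [Finset.coe_filter, Set.mem_setOf_eq] at ht
    exact ((hPmem t).1 ht.1).1
  · intro t ht x hx y hy hxt hty
    obtain ⟨hxP, hxI⟩ := Finset.mem_filter.1 hx
    obtain ⟨hyP, hyI⟩ := Finset.mem_filter.1 hy
    refine Finset.mem_filter.2 ⟨(hPmem t).2 ⟨ht, le_trans ((hPmem x).1 hxP).2.1 hxt,
      le_trans hty ((hPmem y).1 hyP).2.2⟩, ?_⟩
    exact hI.out hxI hyI ⟨hxt, hty⟩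

lemma stepsN_props {T : ℝ} (hT : 0 ≤ T) {R : (ℝ → ℝ) → (ℝ → ℝ) → Prop}
    (hR : ∀ x y, R x y → StepPM x y ∨ StepMP x y) :
    ∀ m : ℕ, ∀ x y : ℝ → ℝ, StepsN R m x y → IsEventSeq T x → IsPM x →
      IsEventSeq T y ∧ IsPM y ∧ discNorm T y ≤ discNorm T x ∧ totSum y = totSum x := by
  intro m
  induction m with
  | zero => intro x y h hE hP; cases h; exact ⟨hE, hP, le_rfl, rfl⟩
  | succ m ih =>
      intro x z h hE hP
      obtain ⟨y, hxy, hyz⟩ := h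
      have h1 := hR x y hxy
      obtain ⟨a, b, c, d⟩ := ih y z hyz (step_event h1 hE) (step_pm h1 hP)
      exact ⟨a, b, c.trans (step_disc hT h1 hE), d.trans (step_tot h1 hE.1)⟩

lemma alt_list_sum : ∀ l : List ℝ, (∀ x ∈ l, x = 1 ∨ x = -1) →
    l.IsChain (fun x y => x * y < 0) → |l.sum| ≤ 1
  | [], _, _ => by simp
  | [x], h, _ => by rcases h x (by simp) with rfl | rfl <;> simp
  | x :: y :: t, h, hc => by
      have hx := h x (by simp)
      have hy := h y (by simp)
      have hxy : x * y < 0 := (List.isChain_cons_cons.1 hc).1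
      have hyx : y = -x := by
        rcases hx with rfl | rfl <;> rcases hy with rfl | rfl <;> linarith
      have ht := alt_list_sum t (fun z hz => h z (by simp [hz]))
        ((List.isChain_cons_cons.1 hc).2.tail)
      simp only [List.sum_cons, hyx]
      have : x + (-x + t.sum) = t.sum := by ring
      rw [this]
      exact ht

lemma alternating_disc_le_one {T : ℝ} (hT : 0 ≤ T) {η : ℝ → ℝ} (hE : IsEventSeq T η)
    (hP : IsPM η) (hA : Alternating η) : discNorm T η ≤ 1 := by
  obtain ⟨hfin, hsub⟩ := hE
  apply discNorm_le hT
  rintro x ⟨a, b, ha, hab, hb, rfl⟩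
  rw [isum_eq_sum_of_subset (supp_sub hfin) a b]
  set P := hfin.toFinset.filter (fun t => a ≤ t ∧ t ≤ b) with hPdef
  have hPmem : ∀ t, t ∈ P ↔ (t ∈ support η ∧ a ≤ t ∧ t ≤ b) := by
    intro t; simp [hPdef, Set.Finite.mem_toFinset, and_assoc]
  set l := P.sort (· ≤ ·) with hl
  have hml : ∀ t, t ∈ l ↔ t ∈ P := fun t => Finset.mem_sort _
  have hsum : ∑ t ∈ P, η t = (l.map η).sum := by
    rw [← Finset.sum_map_toList]
    exact (List.Perm.sum_eq (List.Perm.map η (Finset.sort_perm_toList _ _))).symm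
  have hsl : l.Pairwise (· < ·) := (Finset.sortedLT_sort P).pairwise
  have hget : ∀ i j : Fin l.length, i < j → l.get i < l.get j :=
    fun i j hij => List.pairwise_iff_get.1 hsl i j hij
  have hchain : l.IsChain (fun s u => η s * η u < 0) := by
    rw [List.isChain_iff_getElem]
    intro i h
    have hi : i < l.length := by omega
    have hi1 : i + 1 < l.length := by omega
    set s := l.get ⟨i, hi⟩ with hs
    set u := l.get ⟨i + 1, hi1⟩ with hu
    have hsmem : s ∈ support η := ((hPmem s).1 ((hml s).1 (l.get_mem _))).1
    have humem : u ∈ support η := ((hPmem u).1 ((hml u).1 (l.get_mem _))).1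
    have hsu : s < u := hget ⟨i, hi⟩ ⟨i + 1, hi1⟩ (by simp)
    apply hA s u hsmem humem hsu
    intro t htsupp ⟨h1t, h2t⟩
    have htP : t ∈ P := (hPmem t).2 ⟨htsupp,
      le_trans ((hPmem s).1 ((hml s).1 (l.get_mem _))).2.1 (le_of_lt h1t),
      le_trans (le_of_lt h2t) ((hPmem u).1 ((hml u).1 (l.get_mem _))).2.2⟩
    obtain ⟨j, hjt⟩ := List.mem_iff_get.1 ((hml t).2 htP)
    have hij : (⟨i, hi⟩ : Fin l.length) < j := by
      rcases lt_trichotomy ((⟨i, hi⟩ : Fin l.length)) j with hlt | heq | hgt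
      · exact hlt
      · exfalso; rw [← heq] at hjt; rw [← hjt] at h1t; exact lt_irrefl _ h1t
      · exfalso; have := hget j _ hgt; rw [hjt] at this; exact lt_irrefl _ (h1t.trans this)
    have hji : j < (⟨i + 1, hi1⟩ : Fin l.length) := by
      rcases lt_trichotomy j ((⟨i + 1, hi1⟩ : Fin l.length)) with hlt | heq | hgt
      · exact hlt
      · exfalso; rw [heq] at hjt; rw [← hjt] at h2t; exact lt_irrefl _ h2t
      · exfalso; have := hget _ j hgt; rw [hjt] at this; exact lt_irrefl _ (h2t.trans this)
    have h1 : i < j.val := hij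
    have h2 : j.val < i + 1 := hji
    omega
  rw [hsum]
  apply alt_list_sum
  · intro x hx
    obtain ⟨t, htl, rfl⟩ := List.mem_map.1 hx
    exact hP t ((hPmem t).1 ((hml t).1 htl)).1
  · exact (List.isChain_map η).2 hchain

end S6
namespace S6
open Function Set

lemma adj_pair {η : ℝ → ℝ} (hfin : (support η).Finite) (hP : IsPM η) {v : ℝ}
    (hv : v = 1 ∨ v = -1) :
    ∀ n : ℕ, ∀ s u : ℝ, (hfin.toFinset.filter (fun t => s < t ∧ t < u)).card ≤ n →
      s < u → η s = v → η u = -v →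
      ∃ s' u', s' < u' ∧ η s' = v ∧ η u' = -v ∧ ∀ t, s' < t → t < u' → η t = 0 := by
  intro n
  induction n with
  | zero =>
      intro s u hcard hsu hs hu
      refine ⟨s, u, hsu, hs, hu, fun t h1 h2 => ?_⟩
      by_contra h0
      have ht : t ∈ hfin.toFinset.filter (fun t => s < t ∧ t < u) :=
        Finset.mem_filter.2 ⟨(Set.Finite.mem_toFinset hfin).2 h0, h1, h2⟩
      have := Finset.card_pos.2 ⟨t, ht⟩
      omega
  | succ n ih =>
      intro s u hcard hsu hs hu
      by_cases hemp : ∀ t, s < t → t < u → η t = 0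
      · exact ⟨s, u, hsu, hs, hu, hemp⟩
      · push_neg at hemp
        obtain ⟨t, h1, h2, h0⟩ := hemp
        have htv : η t = v ∨ η t = -v := by
          rcases hv with rfl | rfl <;> rcases hP t h0 with h | h
          · exact Or.inl h
          · exact Or.inr (by norm_num [h])
          · exact Or.inr (by norm_num [h])
          · exact Or.inl h
        have hmem : t ∈ hfin.toFinset.filter (fun x => s < x ∧ x < u) :=
          Finset.mem_filter.2 ⟨(Set.Finite.mem_toFinset hfin).2 h0, h1, h2⟩
        rcases htv with htv | htv
        · -- use interval (t, u)
          apply ih t u ?_ h2 htv hu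
          have hsubf : hfin.toFinset.filter (fun x => t < x ∧ x < u) ⊆
              (hfin.toFinset.filter (fun x => s < x ∧ x < u)).erase t := by
            intro x hx
            obtain ⟨hx1, hx2, hx3⟩ := Finset.mem_filter.1 hx
            exact Finset.mem_erase.2 ⟨ne_of_gt hx2, Finset.mem_filter.2 ⟨hx1, h1.trans hx2, hx3⟩⟩
          have := Finset.card_le_card hsubf
          have := Finset.card_erase_of_mem hmem
          omega
        · -- use interval (s, t)
          apply ih s t ?_ h1 hs htv
          have hsubf : hfin.toFinset.filter (fun x => s < x ∧ x < t) ⊆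
              (hfin.toFinset.filter (fun x => s < x ∧ x < u)).erase t := by
            intro x hx
            obtain ⟨hx1, hx2, hx3⟩ := Finset.mem_filter.1 hx
            exact Finset.mem_erase.2 ⟨ne_of_lt hx3, Finset.mem_filter.2 ⟨hx1, hx2, hx3.trans h2⟩⟩
          have := Finset.card_le_card hsubf
          have := Finset.card_erase_of_mem hmem
          omega

lemma phase1 {T : ℝ} : ∀ N : ℕ, ∀ η : ℝ → ℝ, (support η).ncard ≤ N →
    IsEventSeq T η → IsPM η →
    ∃ m ζ, StepsN StepPM m η ζ ∧ IsEventSeq T ζ ∧ IsPM ζ ∧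
      totSum ζ = totSum η ∧ (∀ s u, s < u → ζ s = 1 → ζ u ≠ -1) := by
  intro N
  induction N with
  | zero =>
      intro η hn hE hP
      refine ⟨0, η, rfl, hE, hP, rfl, fun s u hsu hs hu => ?_⟩
      have hmem : s ∈ support η := by rw [Function.mem_support, hs]; norm_num
      have hemp : support η = ∅ :=
        (Set.ncard_eq_zero hE.1).1 (le_antisymm hn (Nat.zero_le _))
      rw [hemp] at hmem
      exact hmem
  | succ N ih =>
      intro η hn hE hP
      by_cases hgood : ∀ s u, s < u → η s = 1 → η u ≠ -1
      · exact ⟨0, η, rfl, hE, hP, rfl, hgood⟩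
      · push_neg at hgood
        obtain ⟨s, u, hsu, hs, hu⟩ := hgood
        obtain ⟨s', u', hsu', hs', hu', hgap⟩ :=
          adj_pair hE.1 hP (Or.inl rfl) _ s u le_rfl hsu hs (by norm_num [hu])
        have hu'' : η u' = -1 := by norm_num [hu']
        set η₁ := Function.update (Function.update η s' 0) u' 0 with hη₁
        have hstep : StepPM η η₁ := ⟨s', u', hsu', hs', hu'', hgap, rfl⟩
        have hor : StepPM η η₁ ∨ StepMP η η₁ := Or.inl hstep
        have hcard : (support η₁).ncard ≤ N := by
          have := Set.ncard_lt_ncard (step_ssub hor) hE.1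
          omega
        obtain ⟨m, ζ, hsteps, a, b, c, d⟩ := ih η₁ hcard (step_event hor hE) (step_pm hor hP)
        exact ⟨m + 1, ζ, ⟨η₁, hstep, hsteps⟩, a, b, c.trans (step_tot hor hE.1), d⟩

lemma phase2 {T : ℝ} : ∀ N : ℕ, ∀ η : ℝ → ℝ, (support η).ncard ≤ N →
    IsEventSeq T η → IsPM η → (∀ s u, s < u → η s = 1 → η u ≠ -1) →
    ∃ n η', StepsN StepMP n η η' ∧ IsEventSeq T η' ∧ IsPM η' ∧
      totSum η' = totSum η ∧
      ((∀ t ∈ support η', η' t = 1) ∨ (∀ t ∈ support η', η' t = -1)) := by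
  intro N
  induction N with
  | zero =>
      intro η hn hE hP hgood
      refine ⟨0, η, rfl, hE, hP, rfl, Or.inl fun t ht => ?_⟩
      have hemp : support η = ∅ :=
        (Set.ncard_eq_zero hE.1).1 (le_antisymm hn (Nat.zero_le _))
      rw [hemp] at ht
      exact ht.elim
  | succ N ih =>
      intro η hn hE hP hgood
      by_cases hdone : (∀ t ∈ support η, η t = 1) ∨ (∀ t ∈ support η, η t = -1)
      · exact ⟨0, η, rfl, hE, hP, rfl, hdone⟩
      · push_neg at hdone
        obtain ⟨⟨t₁, ht₁m, ht₁⟩, ⟨t₂, ht₂m, ht₂⟩⟩ := hdone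
        have hv₁ : η t₁ = -1 := (hP t₁ ht₁m).resolve_left ht₁
        have hv₂ : η t₂ = 1 := (hP t₂ ht₂m).resolve_right ht₂
        have hlt : t₁ < t₂ := by
          rcases lt_trichotomy t₁ t₂ with h | h | h
          · exact h
          · exfalso; rw [h, hv₂] at hv₁; norm_num at hv₁
          · exact absurd hv₁ (hgood t₂ t₁ h hv₂)
        obtain ⟨s', u', hsu', hs', hu', hgap⟩ :=
          adj_pair hE.1 hP (Or.inr rfl) _ t₁ t₂ le_rfl hlt hv₁ (by norm_num [hv₂])
        have hu'' : η u' = 1 := by norm_num [hu']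
        set η₁ := Function.update (Function.update η s' 0) u' 0 with hη₁
        have hstep : StepMP η η₁ := ⟨s', u', hsu', hs', hu'', hgap, rfl⟩
        have hor : StepPM η η₁ ∨ StepMP η η₁ := Or.inr hstep
        have hcard : (support η₁).ncard ≤ N := by
          have := Set.ncard_lt_ncard (step_ssub hor) hE.1
          omega
        have hgood₁ : ∀ s u, s < u → η₁ s = 1 → η₁ u ≠ -1 := by
          intro s u hsu hs1 hu1
          have hsm : s ∈ support η₁ := by rw [Function.mem_support, hs1]; norm_num
          have hum : u ∈ support η₁ := by rw [Function.mem_support, hu1]; norm_num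
          have h1 : η s = 1 := by rw [← step_agree hor s hsm]; exact hs1
          have h2 : η u = -1 := by rw [← step_agree hor u hum]; exact hu1
          exact hgood s u hsu h1 h2
        obtain ⟨n, η', hsteps, a, b, c, d⟩ :=
          ih η₁ hcard (step_event hor hE) (step_pm hor hP) hgood₁
        exact ⟨n + 1, η', ⟨η₁, hstep, hsteps⟩, a, b, c.trans (step_tot hor hE.1), d⟩

lemma tot_card {η : ℝ → ℝ} (hfin : (support η).Finite)
    (h1 : ∀ t ∈ support η, η t = 1) :
    totSum η = (Nat.card (support η) : ℝ) := by
  unfold totSum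
  rw [finsum_eq_sum_of_support_subset _ (supp_sub hfin),
    Finset.sum_congr rfl (fun t ht => h1 t ((Set.Finite.mem_toFinset hfin).1 ht)),
    Finset.sum_const, nsmul_eq_mul, mul_one, Nat.card_coe_set_eq,
    Set.ncard_eq_toFinset_card _ hfin]

lemma isum_all {T : ℝ} {η : ℝ → ℝ} (hE : IsEventSeq T η) : isum η 0 T = totSum η := by
  obtain ⟨hfin, hsub⟩ := hE
  rw [isum_eq_sum_of_subset (supp_sub hfin) 0 T]
  unfold totSum
  rw [finsum_eq_sum_of_support_subset _ (supp_sub hfin)]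
  congr 1
  apply Finset.filter_true_of_mem
  intro t ht
  have := hsub ((Set.Finite.mem_toFinset hfin).1 ht)
  exact ⟨this.1, this.2⟩

lemma ones_disc {T : ℝ} (hT : 0 ≤ T) {η : ℝ → ℝ} (hE : IsEventSeq T η)
    (h1 : ∀ t ∈ support η, η t = 1) :
    (Nat.card (support η) : ℝ) ≤ discNorm T η := by
  have h := le_discNorm hE.1 (le_refl (0:ℝ)) hT (le_refl T)
  rw [isum_all hE, tot_card hE.1 h1] at h
  rwa [abs_of_nonneg (by positivity)] at h

lemma supp_neg (η : ℝ → ℝ) : support (-η) = support η := by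
  ext t; simp

lemma tot_neg {η : ℝ → ℝ} (hfin : (support η).Finite) : totSum (-η) = -totSum η := by
  unfold totSum
  rw [finsum_eq_sum_of_support_subset η (supp_sub hfin),
    finsum_eq_sum_of_support_subset (-η) (by rw [supp_neg]; exact supp_sub hfin),
    ← Finset.sum_neg_distrib]
  rfl

end S6
namespace S6
open Function Set

lemma lower_bound {T : ℝ} (hT : 0 < T) (p : Seminorm ℝ (ℝ → ℝ)) {ε c : ℝ}
    (hε : 0 < ε) (hc : 0 < c)
    (h2 : ∀ η : ℝ → ℝ, IsEventSeq T η → η ≠ 0 →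
        (∀ t ∈ Function.support η, η t = 1) →
        ε ≤ p η / (Nat.card (Function.support η) : ℝ))
    (h3 : ∀ η : ℝ → ℝ, IsEventSeq T η → IsPM η →
        ∀ I : Set ℝ, I.OrdConnected → I ⊆ Set.Icc 0 T →
        ∀ m n : ℕ, ∀ ζ η' : ℝ → ℝ,
          StepsN StepPM m (Set.indicator I η) ζ → StepsN StepMP n ζ η' →
          p η' ≤ c * p η) :
    ∀ η : ℝ → ℝ, IsEventSeq T η → IsPM η → (ε / c) * discNorm T η ≤ p η := by
  intro η hE hPm
  obtain ⟨a, b, ha, hab, hb, hd⟩ := discNorm_mem hT.le hE.1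
  set θ := (Set.Icc a b).indicator η with hθ
  have hEθ : IsEventSeq T θ := indicator_event hE _
  have hPθ : IsPM θ := indicator_pm hPm _
  have htot : totSum θ = isum η a b := by
    unfold totSum
    rw [finsum_eq_sum_of_support_subset _ ((ind_supp _).trans (supp_sub hE.1)),
      isum_eq_sum_of_subset (supp_sub hE.1) a b,
      show (∑ t ∈ hE.1.toFinset, θ t)
          = ∑ t ∈ hE.1.toFinset, (if a ≤ t ∧ t ≤ b then η t else 0) from
        Finset.sum_congr rfl (fun t _ => by
          rw [hθ, Set.indicator_apply]
          simp [Set.mem_Icc])]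
    exact (Finset.sum_filter _ _).symm
  obtain ⟨m, ζ, hst1, hEζ, hPζ, htζ, hgood⟩ :=
    phase1 (support θ).ncard θ le_rfl hEθ hPθ
  obtain ⟨n, η', hst2, hEη', hPη', htη', hsign⟩ :=
    phase2 (support ζ).ncard ζ le_rfl hEζ hPζ hgood
  have hpη' : p η' ≤ c * p η :=
    h3 η hE hPm (Set.Icc a b) Set.ordConnected_Icc (Set.Icc_subset_Icc ha hb)
      m n ζ η' hst1 hst2
  have hchain : totSum η' = isum η a b := by rw [htη', htζ, htot]
  rcases Set.eq_empty_or_nonempty (support η') with hemp | hne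
  · -- η' = 0, so the discrepancy is 0
    have hz : η' = 0 := Function.support_eq_empty_iff.1 hemp
    have : totSum η' = 0 := by rw [hz]; unfold totSum; exact finsum_zero
    have hd0 : discNorm T η = 0 := by rw [hd, ← hchain, this, abs_zero]
    rw [hd0, mul_zero]
    exact apply_nonneg p η
  · have hne0 : η' ≠ 0 := Function.support_nonempty_iff.1 hne
    have hkpos : 0 < Nat.card (support η') := by
      rw [Nat.card_coe_set_eq]
      exact (Set.ncard_pos hEη'.1).2 hne
    set k : ℕ := Nat.card (support η') with hk
    have hkR : (0:ℝ) < (k:ℝ) := by exact_mod_cast hkpos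
    have key : ε * k ≤ c * p η ∧ discNorm T η = (k:ℝ) := by
      rcases hsign with hones | hmones
      · have htc : totSum η' = (k:ℝ) := tot_card hEη'.1 hones
        have hεk := h2 η' hEη' hne0 hones
        rw [← hk] at hεk
        constructor
        · calc ε * k ≤ p η' := by
                rw [← div_mul_cancel₀ (p η') (ne_of_gt hkR)]
                exact mul_le_mul_of_nonneg_right hεk hkR.le
            _ ≤ c * p η := hpη'
        · rw [hd, ← hchain, htc, abs_of_nonneg hkR.le]
      · -- all values -1 : use -η'
        set η'' := -η' with hη''
        have hsupp'' : support η'' = support η' := supp_neg η'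
        have hE'' : IsEventSeq T η'' := ⟨by rw [hsupp'']; exact hEη'.1,
          by rw [hsupp'']; exact hEη'.2⟩
        have hones'' : ∀ t ∈ support η'', η'' t = 1 := by
          intro t ht
          rw [hsupp''] at ht
          have := hmones t ht
          simp [hη'', this]
        have hne'' : η'' ≠ 0 := by
          rw [← hsupp''] at hne
          exact Function.support_nonempty_iff.1 hne
        have hk'' : Nat.card (support η'') = k := by rw [hsupp'', hk]
        have htc'' : totSum η'' = (k:ℝ) := by
          rw [← hk'']; exact tot_card hE''.1 hones''
        have htcn : totSum η' = -(k:ℝ) := by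
          have := tot_neg hEη'.1
          rw [← hη''] at this
          rw [htc''] at this
          linarith
        have hεk := h2 η'' hE'' hne'' hones''
        rw [hk''] at hεk
        have hp'' : p η'' = p η' := map_neg_eq_map p η'
        constructor
        · calc ε * k ≤ p η'' := by
                rw [← div_mul_cancel₀ (p η'') (ne_of_gt hkR)]
                exact mul_le_mul_of_nonneg_right hεk hkR.le
            _ = p η' := hp''
            _ ≤ c * p η := hpη'
        · rw [hd, ← hchain, htcn, abs_neg, abs_of_nonneg hkR.le]
    obtain ⟨h4, h5⟩ := key
    rw [h5, div_mul_eq_mul_div, div_le_iff₀ hc]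
    linarith

end S6
namespace S6
open Function Set

lemma seminorm_sum_le (p : Seminorm ℝ (ℝ → ℝ)) {ι : Type} (s : Finset ι) (f : ι → ℝ → ℝ) :
    p (∑ i ∈ s, f i) ≤ ∑ i ∈ s, p (f i) := by
  induction s using Finset.cons_induction with
  | empty => simp
  | cons i s hi ih =>
      rw [Finset.sum_cons, Finset.sum_cons]
      exact (map_add_le_add p _ _).trans (by linarith)

lemma cross (f : ℕ → ℤ) (L : ℤ) : ∀ a b : ℕ, a ≤ b → L ≤ f a → f b < L →
    ∃ k, a ≤ k ∧ k < b ∧ L ≤ f k ∧ f (k + 1) < L := by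
  intro a b hab ha hb
  by_contra hcon
  push_neg at hcon
  have key : ∀ j, a ≤ j → j ≤ b → L ≤ f j := by
    intro j hj1
    induction j, hj1 using Nat.le_induction with
    | base => intro _; exact ha
    | succ k hk ihk =>
        intro hj2
        exact hcon k hk (Nat.lt_of_succ_le hj2) (ihk (le_trans (Nat.le_succ k) hj2))
  exact absurd (key b hab le_rfl) (not_le.2 hb)

lemma cross' (f : ℕ → ℤ) (L : ℤ) : ∀ a b : ℕ, a ≤ b → f a < L → L ≤ f b →
    ∃ k, a ≤ k ∧ k < b ∧ f k < L ∧ L ≤ f (k + 1) := by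
  intro a b hab ha hb
  by_contra hcon
  push_neg at hcon
  have key : ∀ j, a ≤ j → j ≤ b → f j < L := by
    intro j hj1
    induction j, hj1 using Nat.le_induction with
    | base => intro _; exact ha
    | succ k hk ihk =>
        intro hj2
        by_contra hc
        push_neg at hc
        exact absurd hc (not_le.2 (hcon k hk (Nat.lt_of_succ_le hj2)
          (ihk (le_trans (Nat.le_succ k) hj2))))
  exact absurd (key b hab le_rfl) (not_lt.2 hb)

lemma upper_bound {T : ℝ} (hT : 0 < T) (p : Seminorm ℝ (ℝ → ℝ)) {M : ℝ}
    (hM : ∀ η : ℝ → ℝ, IsEventSeq T η → IsPM η → η ≠ 0 → Alternating η → p η ≤ M) :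
    ∀ η : ℝ → ℝ, IsEventSeq T η → IsPM η → p η ≤ (max M 1) * discNorm T η := by
  intro η hE hPm
  obtain ⟨hfin, hsub⟩ := hE
  classical
  set l : List ℝ := hfin.toFinset.sort (· ≤ ·) with hl
  set N : ℕ := l.length with hN
  set g : ℕ → ℝ := fun k => l.getD k 0 with hg
  set w : ℝ → ℤ := fun t => if η t = 1 then 1 else -1 with hw
  set Z : ℕ → ℤ := fun k => ((l.take k).map w).sum with hZ
  -- basic facts
  have hgeq : ∀ k, ∀ hk : k < N, g k = l[k]'hk := by
    intro k hk
    simp only [hg]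
    exact List.getD_eq_getElem l 0 hk
  have hmeml : ∀ t, t ∈ l ↔ t ∈ support η := by
    intro t; rw [hl, Finset.mem_sort, Set.Finite.mem_toFinset]
  have hgmem : ∀ k, k < N → g k ∈ support η := by
    intro k hk
    rw [hgeq k hk]
    exact (hmeml _).1 (List.getElem_mem hk)
  have hsl : l.Pairwise (· < ·) := (Finset.sortedLT_sort _).pairwise
  have hgmono : ∀ j k, j < k → k < N → g j < g k := by
    intro j k hjk hk
    have hj : j < N := hjk.trans hk
    have := List.pairwise_iff_get.1 hsl ⟨j, hj⟩ ⟨k, hk⟩ hjk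
    rw [hgeq j hj, hgeq k hk]
    simpa using this
  have hgmono' : ∀ j k, j ≤ k → k < N → g j ≤ g k := by
    intro j k hjk hk
    rcases eq_or_lt_of_le hjk with rfl | h
    · exact le_rfl
    · exact (hgmono j k h hk).le
  have hgreflect : ∀ j k, j < N → k < N → g j < g k → j < k := by
    intro j k hj _ hgt
    by_contra hc
    push_neg at hc
    exact absurd (hgmono' k j hc hj) (not_le.2 hgt)
  have hginj : ∀ j k, j < N → k < N → g j = g k → j = k := by
    intro j k hj hk he
    rcases lt_trichotomy j k with h | h | h
    · exact absurd (hgmono j k h hk) (by rw [he]; exact lt_irrefl _)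
    · exact h
    · exact absurd (hgmono k j h hj) (by rw [he]; exact lt_irrefl _)
  have hsupp_ex : ∀ t ∈ support η, ∃ k, k < N ∧ g k = t := by
    intro t ht
    obtain ⟨⟨k, hk⟩, he⟩ := List.mem_iff_get.1 ((hmeml t).2 ht)
    exact ⟨k, hk, by rw [hgeq k hk]; simpa using he⟩
  have hwval : ∀ k, k < N → ((w (g k) = 1 ∧ η (g k) = 1) ∨ (w (g k) = -1 ∧ η (g k) = -1)) := by
    intro k hk
    rcases hPm (g k) (hgmem k hk) with h | h
    · exact Or.inl ⟨by rw [hw]; simp [h], h⟩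
    · exact Or.inr ⟨by rw [hw]; simp [h, show (-1:ℝ) ≠ 1 by norm_num], h⟩
  have hzstep : ∀ k, k < N → Z (k + 1) = Z k + w (g k) := by
    intro k hk
    simp only [hZ]
    rw [List.take_succ, List.map_append, List.sum_append]
    congr 1
    rw [List.getElem?_eq_getElem hk]
    simp only [Option.toList_some, List.map_cons, List.map_nil, List.sum_cons,
      List.sum_nil, add_zero]
    rw [hgeq k hk]
  have hzsum : ∀ j, j ≤ N → Z j = ∑ k ∈ Finset.range j, w (g k) := by
    intro j
    induction j with
    | zero => intro _; simp [hZ]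
    | succ j ih =>
        intro hj
        rw [Finset.sum_range_succ, ← ih (le_trans (Nat.le_succ j) hj),
          hzstep j (Nat.lt_of_succ_le hj)]
  have hzslice : ∀ i j, i ≤ j → j ≤ N →
      ((Z j - Z i : ℤ) : ℝ) = ∑ k ∈ Finset.Ico i j, η (g k) := by
    intro i j hij hj
    rw [hzsum j hj, hzsum i (hij.trans hj), ← Finset.sum_Ico_eq_sub _ hij]
    push_cast
    apply Finset.sum_congr rfl
    intro k hk
    have hkN : k < N := lt_of_lt_of_le (Finset.mem_Ico.1 hk).2 hj
    rcases hwval k hkN with ⟨h1, h2⟩ | ⟨h1, h2⟩ <;> rw [h1, h2] <;> norm_num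
  -- realization of slices as interval sums
  have hrealize : ∀ i j, i < j → j ≤ N →
      |((Z j - Z i : ℤ) : ℝ)| ≤ discNorm T η := by
    intro i j hij hj
    have hj1 : j - 1 < N := by omega
    set a : ℝ := if i = 0 then 0 else (g (i - 1) + g i) / 2 with ha
    set b : ℝ := g (j - 1) with hb
    have hiN : i < N := lt_of_lt_of_le hij hj
    have hi0 : (0:ℝ) ≤ g i := (hsub (hgmem i hiN)).1
    have hbT : b ≤ T := (hsub (hgmem _ hj1)).2
    have hag : a ≤ g i ∧ 0 ≤ a ∧ (∀ k, k < N → i ≤ k → a ≤ g k) ∧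
        (∀ k, k < N → a ≤ g k → i ≤ k) := by
      constructor
      · rw [ha]
        split_ifs with h
        · exact hi0
        · have := hgmono (i - 1) i (by omega) hiN
          linarith
      constructor
      · rw [ha]
        split_ifs with h
        · exact le_rfl
        · have h1 := (hsub (hgmem (i - 1) (by omega))).1
          have := hgmono (i - 1) i (by omega) hiN
          linarith
      constructor
      · intro k hk hik
        calc a ≤ g i := by
              rw [ha]
              split_ifs with h
              · exact hi0
              · have := hgmono (i - 1) i (by omega) hiN
                linarith
          _ ≤ g k := hgmono' i k hik hk
      · intro k hk hak
        rw [ha] at hak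
        split_ifs at hak with h
        · omega
        · by_contra hc
          push_neg at hc
          have : g k ≤ g (i - 1) := hgmono' k (i - 1) (by omega) (by omega)
          have := hgmono (i - 1) i (by omega) hiN
          linarith
    obtain ⟨hagi, ha0, hale, hage⟩ := hag
    have hab : a ≤ b := le_trans hagi (hgmono' i (j - 1) (by omega) hj1)
    have hfilter : hfin.toFinset.filter (fun t => a ≤ t ∧ t ≤ b)
        = (Finset.Ico i j).image g := by
      ext t
      simp only [Finset.mem_filter, Set.Finite.mem_toFinset, Finset.mem_image,
        Finset.mem_Ico]
      constructor
      · rintro ⟨ht, h1, h2⟩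
        obtain ⟨k, hkN, rfl⟩ := hsupp_ex t ht
        refine ⟨k, ⟨hage k hkN h1, ?_⟩, rfl⟩
        by_contra hc
        push_neg at hc
        have : g (j - 1) < g k := hgmono (j - 1) k (by omega) hkN
        rw [← hb] at this
        linarith
      · rintro ⟨k, ⟨hik, hkj⟩, rfl⟩
        have hkN : k < N := lt_of_lt_of_le hkj hj
        exact ⟨hgmem k hkN, hale k hkN hik,
          by rw [hb]; exact hgmono' k (j - 1) (by omega) hj1⟩
    have hsum : isum η a b = ((Z j - Z i : ℤ) : ℝ) := by
      rw [isum_eq_sum_of_subset (supp_sub hfin) a b, hfilter, hzslice i j hij.le hj]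
      rw [Finset.sum_image]
      intro x hx y hy he
      exact hginj x y (lt_of_lt_of_le (Finset.mem_Ico.1 hx).2 hj)
        (lt_of_lt_of_le (Finset.mem_Ico.1 hy).2 hj) he
    rw [← hsum]
    exact le_discNorm hfin ha0 hab hbT
  have hslice_le : ∀ i j, i ≤ j → j ≤ N → |((Z j - Z i : ℤ) : ℝ)| ≤ discNorm T η := by
    intro i j hij hj
    rcases eq_or_lt_of_le hij with rfl | h
    · simpa using discNorm_nonneg hT.le hfin
    · exact hrealize i j h hj
  -- levels
  set lvl : ℕ → ℤ := fun k => if η (g k) = 1 then Z (k + 1) else Z k with hlvl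
  set ηl : ℤ → ℝ → ℝ :=
    fun L t => if (∃ k, k < N ∧ g k = t ∧ lvl k = L) then η t else 0 with hηl
  set levels : Finset ℤ := (Finset.range N).image lvl with hlevels
  have hηl_mem : ∀ L t, t ∈ support (ηl L) ↔ ∃ k, k < N ∧ g k = t ∧ lvl k = L := by
    intro L t
    rw [Function.mem_support, hηl]
    simp only
    constructor
    · intro h
      by_contra hc
      rw [if_neg hc] at h
      exact h rfl
    · rintro ⟨k, hk, rfl, hL⟩
      rw [if_pos ⟨k, hk, rfl, hL⟩]
      exact hgmem k hk
  have hηl_supp : ∀ L, support (ηl L) ⊆ support η := by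
    intro L t ht
    obtain ⟨k, hk, rfl, _⟩ := (hηl_mem L t).1 ht
    exact hgmem k hk
  have hηl_val : ∀ L, ∀ t ∈ support (ηl L), ηl L t = η t := by
    intro L t ht
    obtain ⟨k, hk, rfl, hL⟩ := (hηl_mem L t).1 ht
    rw [hηl]
    simp only
    rw [if_pos ⟨k, hk, rfl, hL⟩]
  -- decomposition
  have hdecomp : η = ∑ L ∈ levels, ηl L := by
    funext t
    rw [Finset.sum_apply]
    by_cases ht : t ∈ support η
    · obtain ⟨k₀, hk₀, rfl⟩ := hsupp_ex t ht
      have huniq : ∀ L, ηl L (g k₀) = if L = lvl k₀ then η (g k₀) else 0 := by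
        intro L
        rw [hηl]
        simp only
        by_cases hL : L = lvl k₀
        · rw [if_pos ⟨k₀, hk₀, rfl, hL.symm⟩, if_pos hL]
        · rw [if_neg, if_neg hL]
          rintro ⟨k, hk, hgk, hLk⟩
          exact hL (by rw [← hLk, hginj k k₀ hk hk₀ hgk])
      calc η (g k₀) = ∑ L ∈ levels, if L = lvl k₀ then η (g k₀) else 0 := by
            rw [Finset.sum_ite_eq' levels (lvl k₀) (fun _ => η (g k₀)),
              if_pos (Finset.mem_image.2 ⟨k₀, Finset.mem_range.2 hk₀, rfl⟩)]
        _ = ∑ L ∈ levels, ηl L (g k₀) := by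
            exact Finset.sum_congr rfl (fun L _ => (huniq L).symm)
    · have h0 : η t = 0 := Function.notMem_support.1 ht
      rw [h0]
      symm
      apply Finset.sum_eq_zero
      intro L _
      by_contra hc
      exact ht (hηl_supp L (mem_support.2 hc))
  -- each level is alternating
  have halt : ∀ L ∈ levels, IsEventSeq T (ηl L) ∧ IsPM (ηl L) ∧ ηl L ≠ 0 ∧
      Alternating (ηl L) := by
    intro L hLmem
    have hev : IsEventSeq T (ηl L) :=
      ⟨hfin.subset (hηl_supp L), (hηl_supp L).trans hsub⟩
    have hpm : IsPM (ηl L) := by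
      intro t ht
      rw [hηl_val L t ht]
      exact hPm t (hηl_supp L ht)
    have hne : ηl L ≠ 0 := by
      obtain ⟨k, hk, hLk⟩ := Finset.mem_image.1 hLmem
      rw [Finset.mem_range] at hk
      apply Function.support_nonempty_iff.1
      exact ⟨g k, (hηl_mem L (g k)).2 ⟨k, hk, rfl, hLk⟩⟩
    refine ⟨hev, hpm, hne, ?_⟩
    intro s u hsm hum hsu hbet
    obtain ⟨k₁, hk₁, rfl, hL₁⟩ := (hηl_mem L s).1 hsm
    obtain ⟨k₂, hk₂, rfl, hL₂⟩ := (hηl_mem L u).1 hum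
    have hk₁₂ : k₁ < k₂ := hgreflect k₁ k₂ hk₁ hk₂ hsu
    rw [hηl_val L _ hsm, hηl_val L _ hum]
    rcases hPm _ (hgmem k₁ hk₁) with h1 | h1 <;> rcases hPm _ (hgmem k₂ hk₂) with h2 | h2
    · -- both +1 : find a -1 at level L strictly between
      exfalso
      simp only [hlvl] at hL₁ hL₂
      rw [if_pos h1] at hL₁
      rw [if_pos h2] at hL₂
      have hw₁ : w (g k₁) = 1 := ((hwval k₁ hk₁).resolve_right (fun h => by
        rw [h1] at h; norm_num at h)).1
      have hw₂ : w (g k₂) = 1 := ((hwval k₂ hk₂).resolve_right (fun h => by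
        rw [h2] at h; norm_num at h)).1
      have hZk₂ : Z k₂ = L - 1 := by
        have := hzstep k₂ hk₂
        omega
      obtain ⟨k, hka, hkb, hc1, hc2⟩ := cross Z L (k₁ + 1) k₂ hk₁₂
        (by rw [hL₁]) (by omega)
      have hkN : k < N := hkb.trans hk₂
      have hwk : w (g k) = -1 := by
        have := hzstep k hkN
        rcases hwval k hkN with ⟨hh, _⟩ | ⟨hh, _⟩
        · omega
        · exact hh
      have hηk : η (g k) = -1 := (hwval k hkN).resolve_left (fun h => by
        rw [hwk] at h; omega) |>.2
      have hZk : Z k = L := by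
        have := hzstep k hkN
        omega
      have hmem : g k ∈ support (ηl L) := (hηl_mem L (g k)).2
        ⟨k, hkN, rfl, by
          simp only [hlvl]
          rw [if_neg (by rw [hηk]; norm_num : ¬ η (g k) = 1)]
          exact hZk⟩
      exact hbet (g k) hmem ⟨hgmono k₁ k (by omega) hkN, hgmono k k₂ hkb hk₂⟩
    · rw [h1, h2]; norm_num
    · rw [h1, h2]; norm_num
    · -- both -1 : find a +1 at level L strictly between
      exfalso
      simp only [hlvl] at hL₁ hL₂
      rw [if_neg (by rw [h1]; norm_num : ¬ η (g k₁) = 1)] at hL₁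
      rw [if_neg (by rw [h2]; norm_num : ¬ η (g k₂) = 1)] at hL₂
      have hw₁ : w (g k₁) = -1 := ((hwval k₁ hk₁).resolve_left (fun h => by
        rw [h1] at h; norm_num at h)).1
      have hZk₁ : Z (k₁ + 1) = L - 1 := by
        have := hzstep k₁ hk₁
        omega
      obtain ⟨k, hka, hkb, hc1, hc2⟩ := cross' Z L (k₁ + 1) k₂ hk₁₂
        (by omega) (by omega)
      have hkN : k < N := hkb.trans hk₂
      have hwk : w (g k) = 1 := by
        have := hzstep k hkN
        rcases hwval k hkN with ⟨hh, _⟩ | ⟨hh, _⟩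
        · exact hh
        · omega
      have hηk : η (g k) = 1 := ((hwval k hkN).resolve_right (fun h => by
        rw [hwk] at h; omega)).2
      have hZk : Z (k + 1) = L := by
        have := hzstep k hkN
        omega
      have hmem : g k ∈ support (ηl L) := (hηl_mem L (g k)).2
        ⟨k, hkN, rfl, by simp only [hlvl]; rw [if_pos hηk]; exact hZk⟩
      exact (hbet (g k) hmem ⟨hgmono k₁ k (by omega) hkN, hgmono k k₂ hkb hk₂⟩)
  -- counting levels
  set S : Finset ℤ := (Finset.range (N + 1)).image Z with hS
  have hSne : S.Nonempty := ⟨Z 0, Finset.mem_image.2 ⟨0, Finset.mem_range.2 (by omega), rfl⟩⟩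
  set Zmax : ℤ := S.max' hSne with hZmax
  set Zmin : ℤ := S.min' hSne with hZmin
  have hZmem : ∀ k, k ≤ N → Z k ∈ S :=
    fun k hk => Finset.mem_image.2 ⟨k, Finset.mem_range.2 (by omega), rfl⟩
  have hlevels_sub : levels ⊆ Finset.Icc (Zmin + 1) Zmax := by
    intro L hL
    obtain ⟨k, hk, hLk⟩ := Finset.mem_image.1 hL
    rw [Finset.mem_range] at hk
    have h1 : Z k ∈ S := hZmem k hk.le
    have h2 : Z (k + 1) ∈ S := hZmem (k + 1) hk
    have hmin1 := S.min'_le _ h1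
    have hmin2 := S.min'_le _ h2
    have hmax1 := S.le_max' _ h1
    have hmax2 := S.le_max' _ h2
    have hstep := hzstep k hk
    rw [Finset.mem_Icc, ← hLk]
    simp only [hlvl]
    rcases hwval k hk with ⟨hh, hh'⟩ | ⟨hh, hh'⟩
    · rw [if_pos hh']
      omega
    · rw [if_neg (by rw [hh']; norm_num : ¬ η (g k) = 1)]
      omega
  have hcard : (levels.card : ℝ) ≤ discNorm T η := by
    have h1 : levels.card ≤ (Zmax - Zmin).toNat := by
      calc levels.card ≤ (Finset.Icc (Zmin + 1) Zmax).card := Finset.card_le_card hlevels_sub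
        _ = (Zmax - Zmin).toNat := by rw [Int.card_Icc]; congr 1; ring
    calc (levels.card : ℝ) ≤ ((Zmax - Zmin).toNat : ℝ) := by exact_mod_cast h1
      _ ≤ discNorm T η := by
          obtain ⟨kmx, hkmx, hkmxe⟩ := Finset.mem_image.1 (S.max'_mem hSne)
          obtain ⟨kmn, hkmn, hkmne⟩ := Finset.mem_image.1 (S.min'_mem hSne)
          rw [← hZmax] at hkmxe
          rw [← hZmin] at hkmne
          rw [Finset.mem_range] at hkmx hkmn
          have hminmax : Zmin ≤ Zmax := Finset.min'_le _ _ (S.max'_mem hSne)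
          have hcast : ((Zmax - Zmin).toNat : ℝ) = ((Zmax - Zmin : ℤ) : ℝ) := by
            have h0 := Int.toNat_of_nonneg (show (0:ℤ) ≤ Zmax - Zmin by omega)
            exact_mod_cast congrArg (fun z : ℤ => (z : ℝ)) h0
          rw [hcast, ← hkmxe, ← hkmne]
          rcases le_total kmn kmx with ho | ho
          · exact le_trans (le_abs_self _) (hslice_le kmn kmx ho (by omega))
          · have hle := hslice_le kmx kmn ho (by omega)
            have heq : ((Z kmn - Z kmx : ℤ) : ℝ) = -((Z kmx - Z kmn : ℤ) : ℝ) := by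
              push_cast; ring
            rw [heq, abs_neg] at hle
            exact le_trans (le_abs_self _) hle
  -- combine
  have hMle : ∀ L ∈ levels, p (ηl L) ≤ max M 1 := by
    intro L hL
    obtain ⟨hev, hpm, hne, haltL⟩ := halt L hL
    exact (hM (ηl L) hev hpm hne haltL).trans (le_max_left M 1)
  calc p η = p (∑ L ∈ levels, ηl L) := by rw [← hdecomp]
    _ ≤ ∑ L ∈ levels, p (ηl L) := seminorm_sum_le p levels ηl
    _ ≤ levels.card • max M 1 := Finset.sum_le_card_nsmul _ _ _ hMle
    _ = (levels.card : ℝ) * max M 1 := nsmul_eq_mul _ _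
    _ ≤ discNorm T η * max M 1 := by
        apply mul_le_mul_of_nonneg_right hcard
        exact le_trans zero_le_one (le_max_right M 1)
    _ = max M 1 * discNorm T η := mul_comm _ _

end S6


/-- characterization of seminorms equivalent to the discrepancy norm:
a seminorm `‖·‖` satisfies `A₁‖η‖_D ≤ ‖η‖ ≤ A₂‖η‖_D` on ±1-valued event sequences for some
`A₁, A₂ > 0` iff (i) `‖·‖` is bounded on nonzero alternating ±1-valued event sequences,
(ii) `inf ‖η‖ / #supp(η) > 0` over nonzero event sequences with all values `+1`, and
(iii) there is `c > 0` bounding `‖η'‖ ≤ c‖η‖` for any `η'` obtained from a restriction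
`η·1_I` (`I ⊆ [0,T]` an interval) by `m` `(+−)`-steps followed by `n` `(−+)`-steps. -/
theorem stmt6 (T : ℝ) (hT : 0 < T) (p : Seminorm ℝ (ℝ → ℝ)) :
    (∃ A₁ A₂ : ℝ, 0 < A₁ ∧ 0 < A₂ ∧
      ∀ η : ℝ → ℝ, IsEventSeq T η → IsPM η →
        A₁ * discNorm T η ≤ p η ∧ p η ≤ A₂ * discNorm T η) ↔
    (BddAbove {x | ∃ η : ℝ → ℝ, IsEventSeq T η ∧ IsPM η ∧ η ≠ 0 ∧ Alternating η ∧ x = p η} ∧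
     (∃ ε : ℝ, 0 < ε ∧ ∀ η : ℝ → ℝ, IsEventSeq T η → η ≠ 0 →
        (∀ t ∈ Function.support η, η t = 1) →
        ε ≤ p η / (Nat.card (Function.support η) : ℝ)) ∧
     (∃ c : ℝ, 0 < c ∧ ∀ η : ℝ → ℝ, IsEventSeq T η → IsPM η →
        ∀ I : Set ℝ, I.OrdConnected → I ⊆ Set.Icc 0 T →
        ∀ m n : ℕ, ∀ ζ η' : ℝ → ℝ,
          StepsN StepPM m (Set.indicator I η) ζ → StepsN StepMP n ζ η' →
          p η' ≤ c * p η)) := by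
  constructor
  · rintro ⟨A₁, A₂, hA₁, hA₂, hb⟩
    refine ⟨⟨A₂, ?_⟩, ⟨A₁, hA₁, ?_⟩, ⟨A₂ / A₁, div_pos hA₂ hA₁, ?_⟩⟩
    · rintro x ⟨η, hE, hP, hne, hA, rfl⟩
      have h1 := (hb η hE hP).2
      have h2 := S6.alternating_disc_le_one hT.le hE hP hA
      calc p η ≤ A₂ * discNorm T η := h1
        _ ≤ A₂ * 1 := mul_le_mul_of_nonneg_left h2 hA₂.le
        _ = A₂ := mul_one _
    · intro η hE hne h1
      have hPm : IsPM η := fun t ht => Or.inl (h1 t ht)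
      have hlow := (hb η hE hPm).1
      have hones := S6.ones_disc hT.le hE h1
      have hkpos : 0 < (Nat.card (Function.support η) : ℝ) := by
        have hne' : (Function.support η).Nonempty := Function.support_nonempty_iff.2 hne
        rw [Nat.card_coe_set_eq]
        exact_mod_cast (Set.ncard_pos hE.1).2 hne'
      rw [le_div_iff₀ hkpos]
      calc A₁ * (Nat.card (Function.support η) : ℝ) ≤ A₁ * discNorm T η :=
            mul_le_mul_of_nonneg_left hones hA₁.le
        _ ≤ p η := hlow
    · intro η hE hPm I hI hIsub m n ζ η' hst1 hst2
      have hEθ := S6.indicator_event hE I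
      have hPθ := S6.indicator_pm hPm I
      obtain ⟨hEζ, hPζ, hdζ, -⟩ :=
        S6.stepsN_props hT.le (fun x y h => Or.inl h) m _ ζ hst1 hEθ hPθ
      obtain ⟨hEη', hPη', hdη', -⟩ :=
        S6.stepsN_props hT.le (fun x y h => Or.inr h) n ζ η' hst2 hEζ hPζ
      have hdind := S6.indicator_disc hT.le hE hI
      have hup := (hb η' hEη' hPη').2
      have hlow := (hb η hE hPm).1
      calc p η' ≤ A₂ * discNorm T η' := hup
        _ ≤ A₂ * discNorm T η :=
            mul_le_mul_of_nonneg_left (le_trans hdη' (le_trans hdζ hdind)) hA₂.le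
        _ = (A₂ / A₁) * (A₁ * discNorm T η) := by
            rw [← mul_assoc, div_mul_cancel₀ _ (ne_of_gt hA₁)]
        _ ≤ (A₂ / A₁) * p η :=
            mul_le_mul_of_nonneg_left hlow (div_pos hA₂ hA₁).le
  · rintro ⟨hBdd, ⟨ε, hε, h2⟩, ⟨c, hc, h3⟩⟩
    obtain ⟨M, hM⟩ := hBdd
    refine ⟨ε / c, max M 1, div_pos hε hc,
      lt_of_lt_of_le zero_lt_one (le_max_right M 1), ?_⟩
    intro η hE hPm
    constructor
    · exact S6.lower_bound hT p hε hc h2 h3 η hE hPm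
    · exact S6.upper_bound hT p
        (fun η' he hp hne ha => hM ⟨η', he, hp, hne, ha, rfl⟩) η hE hPm
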